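/- For α ∈ (1,2), λ ≥ 0, h > 0, the banded Toeplitz truncation coefficients satisfy: for every ℓ ≥ 2, ∑_{k=0, k≠1}^{ℓ} g_k^(α) < −g_1^(α), i.e., the sum of the nonnegative (off-index-1) tempered coefficients up to index ℓ is strictly less than the absolute value of g_1^(α). -/

import Mathlib

open Real Finset

noncomputable def gchoose (α : ℝ) (k : ℕ) : ℝ :=
  (∏ i ∈ Finset.range k, (α - i)) / (Nat.factorial k)

noncomputable def gtilde (α : ℝ) (k : ℕ) : ℝ := (-1) ^ k * gchoose α k

noncomputable def gtemp (α lam h : ℝ) (k : ℕ) : ℝ :=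
  if k = 1 then gtilde α 1 - Real.exp (h * lam) * (1 - Real.exp (-(h * lam))) ^ α
  else gtilde α k * Real.exp (-(((k : ℝ) - 1) * (h * lam)))

lemma gchoose_zero (α : ℝ) : gchoose α 0 = 1 := by
  simp [gchoose]

lemma gchoose_succ (α : ℝ) (k : ℕ) :
    gchoose α (k + 1) = gchoose α k * (α - k) / (k + 1) := by
  unfold gchoose
  rw [Finset.prod_range_succ, Nat.factorial_succ]
  rw [div_mul_eq_mul_div, div_div]
  push_cast
  rw [mul_comm ((k:ℝ) + 1)]

lemma gtilde_zero (α : ℝ) : gtilde α 0 = 1 := by simp [gtilde, gchoose_zero]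

lemma gtilde_one (α : ℝ) : gtilde α 1 = -α := by
  simp [gtilde, gchoose]

lemma gtilde_succ (α : ℝ) (k : ℕ) :
    ((k : ℝ) + 1) * gtilde α (k + 1) = ((k : ℝ) - α) * gtilde α k := by
  have h3 : ((k : ℝ) + 1) ≠ 0 := by positivity
  unfold gtilde
  rw [gchoose_succ, pow_succ]
  field_simp
  ring

lemma gtilde_two (α : ℝ) : gtilde α 2 = α * (α - 1) / 2 := by
  unfold gtilde gchoose
  rw [Finset.prod_range_succ, Finset.prod_range_succ]
  norm_num

lemma gtilde_pos (α : ℝ) (hα1 : 1 < α) (hα2 : α < 2) :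
    ∀ k, 2 ≤ k → 0 < gtilde α k := by
  intro k hk
  induction k, hk using Nat.le_induction with
  | base =>
      rw [gtilde_two]
      have h1 : 0 < α := by linarith
      have h2 : 0 < α - 1 := by linarith
      positivity
  | succ n hn ih =>
      have hrec := gtilde_succ α n
      have h1 : (0:ℝ) < (n : ℝ) + 1 := by positivity
      have h2 : (0:ℝ) < (n : ℝ) - α := by
        have : (2:ℝ) ≤ (n:ℝ) := by exact_mod_cast hn
        linarith
      nlinarith [mul_pos h2 ih]

/-- Pascal-type identity -/
lemma gchoose_pascal (α : ℝ) (n : ℕ) :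
    gchoose α (n + 1) = gchoose (α - 1) (n + 1) + gchoose (α - 1) n := by
  have hprod : α * ∏ i ∈ Finset.range n, (α - 1 - i)
      = (α - n) * ∏ i ∈ Finset.range n, (α - i) := by
    have h1 := Finset.prod_range_succ' (fun i : ℕ => α - (i : ℝ)) n
    have h2 := Finset.prod_range_succ (fun i : ℕ => α - (i : ℝ)) n
    have h3 : (∏ i ∈ Finset.range n, (α - ((i : ℕ) + 1 : ℕ)))
        = ∏ i ∈ Finset.range n, (α - 1 - i) := by
      apply Finset.prod_congr rfl
      intro i _
      push_cast
      ring
    simp only [h3] at h1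
    rw [h1] at h2
    push_cast at h2 ⊢
    linarith [h2]
  rw [gchoose_succ, gchoose_succ]
  unfold gchoose
  have hF : ((n.factorial : ℕ) : ℝ) ≠ 0 := by positivity
  have hn1 : ((n : ℝ) + 1) ≠ 0 := by positivity
  field_simp
  linear_combination (-1:ℝ) * hprod

lemma alt_sum (α : ℝ) (n : ℕ) :
    ∑ k ∈ Finset.range (n + 1), gtilde α k = (-1) ^ n * gchoose (α - 1) n := by
  induction n with
  | zero => simp [gtilde_zero, gchoose_zero]
  | succ n ih =>
      rw [Finset.sum_range_succ, ih]
      unfold gtilde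
      rw [gchoose_pascal]
      ring

lemma alt_gchoose_neg (α : ℝ) (hα1 : 1 < α) (hα2 : α < 2) :
    ∀ n, 1 ≤ n → (-1) ^ n * gchoose (α - 1) n < 0 := by
  intro n hn
  induction n, hn using Nat.le_induction with
  | base =>
      simp [gchoose]
      linarith
  | succ n hn ih =>
      rw [gchoose_succ]
      have h1 : (0:ℝ) < (n : ℝ) + 1 := by positivity
      have h2 : (0:ℝ) < (n : ℝ) + 1 - α := by
        have : (1:ℝ) ≤ (n:ℝ) := by exact_mod_cast hn
        linarith
      have key : (-1:ℝ) ^ (n+1) * (gchoose (α-1) n * (α - 1 - n) / (n + 1))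
          = ((-1) ^ n * gchoose (α-1) n) * (((n:ℝ) + 1 - α) / (n + 1)) := by
        rw [pow_succ]
        field_simp
        ring
      rw [key]
      exact mul_neg_of_neg_of_pos ih (by positivity)

/-- key telescoping identity for the derivative -/
lemma key_ident (α : ℝ) (n : ℕ) (s : ℝ) :
    (1 - s) * (∑ k ∈ Finset.range (n + 1), gtilde α k * ((k : ℝ) * s ^ (k - 1)))
      + α * (∑ k ∈ Finset.range (n + 1), gtilde α k * s ^ k)
    = -(((n : ℝ) + 1) * gtilde α (n + 1)) * s ^ n := by
  induction n with
  | zero =>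
      have h1 := gtilde_one α
      simp [gtilde_zero, h1]
  | succ n ih =>
      have hrec := gtilde_succ α (n + 1)
      simp only [Finset.sum_range_succ, Nat.add_sub_cancel] at ih ⊢
      push_cast at ih hrec ⊢
      linear_combination ih + s ^ (n + 1) * hrec

lemma main_lt (α : ℝ) (hα1 : 1 < α) (hα2 : α < 2) (n : ℕ) (hn : 2 ≤ n)
    (x : ℝ) (hx0 : 0 < x) (hx1 : x ≤ 1) :
    ∑ k ∈ Finset.range (n + 1), gtilde α k * x ^ k < (1 - x) ^ α := by
  rcases eq_or_lt_of_le hx1 with heq | hlt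
  · -- x = 1
    subst heq
    simp only [one_pow, mul_one, sub_self]
    rw [Real.zero_rpow (by linarith)]
    rw [alt_sum]
    exact alt_gchoose_neg α hα1 hα2 n (by omega)
  · -- x < 1
    set P : ℝ → ℝ := fun s => ∑ k ∈ Finset.range (n + 1), gtilde α k * s ^ k with hP
    set W : ℝ → ℝ := fun s => P s * (1 - s) ^ (-α) with hW
    have hanti : StrictAntiOn W (Set.Icc 0 x) := by
      apply strictAntiOn_of_deriv_neg (convex_Icc 0 x)
      · apply ContinuousOn.mul
        · exact (continuous_finset_sum _ fun k _ =>
            continuous_const.mul (continuous_pow k)).continuousOn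
        · apply ContinuousOn.rpow_const
          · exact (continuous_const.sub continuous_id).continuousOn
          · intro t ht
            left
            have h1 : t ≤ x := ht.2
            have : 1 - t > 0 := by linarith
            linarith
      · intro s hs
        rw [interior_Icc] at hs
        have hs0 : 0 < s := hs.1
        have hs1 : s < 1 := lt_trans hs.2 hlt
        have h1s : 0 < 1 - s := by linarith
        have hPd : HasDerivAt P
            (∑ k ∈ Finset.range (n + 1), gtilde α k * ((k : ℝ) * s ^ (k - 1))) s := by
          apply HasDerivAt.fun_sum
          intro k _
          exact (hasDerivAt_pow k s).const_mul _
        have hQd : HasDerivAt (fun s : ℝ => (1 - s) ^ (-α))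
            (α * (1 - s) ^ (-α - 1)) s := by
          have h1 : HasDerivAt (fun s : ℝ => 1 - s) (-1) s := by
            simpa using (hasDerivAt_id s).const_sub 1
          have h2 := h1.rpow_const (p := -α) (Or.inl h1s.ne')
          convert h2 using 1
          ring
        have hWd : HasDerivAt W
            ((∑ k ∈ Finset.range (n + 1), gtilde α k * ((k : ℝ) * s ^ (k - 1)))
              * (1 - s) ^ (-α) + P s * (α * (1 - s) ^ (-α - 1))) s := hPd.mul hQd
        rw [hWd.deriv]
        have hsplit : (1 - s) ^ (-α) = (1 - s) ^ (-α - 1) * (1 - s) := by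
          rw [Real.rpow_sub h1s, Real.rpow_one]
          field_simp
        rw [hsplit]
        have heq2 : (∑ k ∈ Finset.range (n + 1), gtilde α k * ((k : ℝ) * s ^ (k - 1)))
              * ((1 - s) ^ (-α - 1) * (1 - s)) + P s * (α * (1 - s) ^ (-α - 1))
            = (1 - s) ^ (-α - 1) *
              ((1 - s) * (∑ k ∈ Finset.range (n + 1), gtilde α k * ((k : ℝ) * s ^ (k - 1)))
                + α * P s) := by
          rw [hP]
          ring
        rw [heq2, hP]
        rw [key_ident α n s]
        have hg : 0 < gtilde α (n + 1) := gtilde_pos α hα1 hα2 (n + 1) (by omega)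
        have hrp : 0 < (1 - s) ^ (-α - 1) := Real.rpow_pos_of_pos h1s _
        have hsn : 0 < s ^ n := pow_pos hs0 n
        have hpos : 0 < ((n : ℝ) + 1) * gtilde α (n + 1) * s ^ n := by positivity
        nlinarith [mul_pos hrp hpos]
    have hmem0 : (0:ℝ) ∈ Set.Icc 0 x := ⟨le_refl 0, le_of_lt hx0⟩
    have hmemx : x ∈ Set.Icc 0 x := ⟨le_of_lt hx0, le_refl x⟩
    have hWx : W x < W 0 := hanti hmem0 hmemx hx0
    have hW0 : W 0 = 1 := by
      simp only [hW, hP]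
      rw [Finset.sum_eq_single_of_mem 0 (Finset.mem_range.mpr (by omega))]
      · simp [gtilde_zero]
      · intro k _ hk
        simp [zero_pow hk]
    rw [hW0] at hWx
    have h1x : 0 < 1 - x := by linarith
    have hrpos : 0 < (1 - x) ^ α := Real.rpow_pos_of_pos h1x _
    have hinv : (1 - x) ^ (-α) = ((1 - x) ^ α)⁻¹ := Real.rpow_neg (le_of_lt h1x) α
    have hPx : ∑ k ∈ Finset.range (n + 1), gtilde α k * x ^ k = W x * (1 - x) ^ α := by
      simp only [hW, hP, hinv]
      field_simp
    rw [hPx]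
    calc W x * (1 - x) ^ α < 1 * (1 - x) ^ α :=
          mul_lt_mul_of_pos_right hWx hrpos
      _ = (1 - x) ^ α := one_mul _

theorem stmt_14 (α lam h : ℝ) (hα : 1 < α ∧ α < 2) (hlam : 0 ≤ lam) (hh : 0 < h)
    (l : ℕ) (hl : 2 ≤ l) :
    ∑ k ∈ (Finset.range (l + 1)).erase 1, gtemp α lam h k < -gtemp α lam h 1 := by
  obtain ⟨hα1, hα2⟩ := hα
  set m := h * lam with hm
  have hm0 : 0 ≤ m := mul_nonneg (le_of_lt hh) hlam
  set x := Real.exp (-m) with hx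
  have hx0 : 0 < x := Real.exp_pos _
  have hx1 : x ≤ 1 := by
    rw [hx, ← Real.exp_zero]
    exact Real.exp_le_exp.mpr (by linarith)
  have hxe : x * Real.exp m = 1 := by
    rw [hx, ← Real.exp_add]
    simp
  have hterm : ∀ k : ℕ, k ≠ 1 →
      gtemp α lam h k = gtilde α k * x ^ k * Real.exp m := by
    intro k hk
    rw [gtemp, if_neg hk]
    have h1 : Real.exp (-(((k : ℝ) - 1) * m)) = Real.exp ((k : ℝ) * (-m)) * Real.exp m := by
      rw [← Real.exp_add]
      ring_nf
    rw [h1, Real.exp_nat_mul]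
    rw [← hx]
    ring
  have hsum : ∑ k ∈ (Finset.range (l + 1)).erase 1, gtemp α lam h k
      = (∑ k ∈ (Finset.range (l + 1)).erase 1, gtilde α k * x ^ k) * Real.exp m := by
    rw [Finset.sum_mul]
    apply Finset.sum_congr rfl
    intro k hk
    exact hterm k (Finset.ne_of_mem_erase hk)
  have hg1 : -gtemp α lam h 1 = (α * x + (1 - x) ^ α) * Real.exp m := by
    have : gtemp α lam h 1 = gtilde α 1 - Real.exp m * (1 - x) ^ α := rfl
    rw [this, gtilde_one]
    have e1 : α * x * Real.exp m = α := by
      rw [mul_assoc, hxe, mul_one]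
    linarith [e1]
  rw [hsum, hg1]
  apply mul_lt_mul_of_pos_right _ (Real.exp_pos m)
  have hmain := main_lt α hα1 hα2 l hl x hx0 hx1
  have hsplit : gtilde α 1 * x ^ 1 + ∑ k ∈ (Finset.range (l + 1)).erase 1, gtilde α k * x ^ k
      = ∑ k ∈ Finset.range (l + 1), gtilde α k * x ^ k := by
    have h1 : (1:ℕ) ∈ Finset.range (l + 1) := Finset.mem_range.mpr (by omega)
    exact Finset.add_sum_erase (Finset.range (l + 1)) (fun k => gtilde α k * x ^ k) h1
  rw [← hsplit, gtilde_one, pow_one] at hmain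
  linarith [hmain]
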